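/- For the binary vote choice outcome y₂(c) = 1[-λc + a + ε ≥ 0] with λ a random variable supported in (0,1), ε ~ N(0,1) independent of λ, and fixed alignment a, the CATEs satisfy |CATE(a = -1)| < |CATE(a = 1)| < |CATE(a = 0)|, where CATE(a) = Φ(-a) - E_λ[Φ(λ - a)] and each CATE is negative. -/

import Mathlib

open MeasureTheory ProbabilityTheory

/-- The standard normal CDF. -/
noncomputable def Phi (x : ℝ) : ℝ := ((gaussianReal 0 1) (Set.Iic x)).toReal

/-- `CATE(a) = Φ(-a) - E_λ[Φ(λ - a)]` for vote choice at fixed alignment `a`. -/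
noncomputable def CATE {Ω : Type*} [MeasurableSpace Ω] (μ : Measure Ω)
    (lam : Ω → ℝ) (a : ℝ) : ℝ :=
  Phi (-a) - ∫ ω, Phi (lam ω - a) ∂μ

namespace Stmt6Aux

noncomputable def pdf (x : ℝ) : ℝ := gaussianPDFReal 0 1 x

lemma pdf_pos (x : ℝ) : 0 < pdf x := gaussianPDFReal_pos 0 1 x one_ne_zero

lemma pdf_eq (x : ℝ) : pdf x = (Real.sqrt (2 * Real.pi))⁻¹ * Real.exp (- x ^ 2 / 2) := by
  simp [pdf, gaussianPDFReal]

lemma pdf_even (x : ℝ) : pdf (-x) = pdf x := by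
  rw [pdf_eq, pdf_eq, neg_sq]

lemma pdf_lt {x y : ℝ} (hx : 0 ≤ x) (hxy : x < y) : pdf y < pdf x := by
  rw [pdf_eq, pdf_eq]
  have h : Real.exp (- y ^ 2 / 2) < Real.exp (- x ^ 2 / 2) := by
    apply Real.exp_lt_exp.2
    nlinarith
  have hc : (0:ℝ) < (Real.sqrt (2 * Real.pi))⁻¹ := by
    positivity
  exact (mul_lt_mul_iff_right₀ hc).2 h

lemma pdf_integrable : Integrable pdf := integrable_gaussianPDFReal 0 1

lemma pdf_intervalIntegrable (a b : ℝ) : IntervalIntegrable pdf volume a b :=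
  pdf_integrable.intervalIntegrable

lemma Phi_eq (x : ℝ) : Phi x = ∫ t in Set.Iic x, pdf t := by
  rw [Phi, gaussianReal_apply_eq_integral 0 one_ne_zero,
    ENNReal.toReal_ofReal (setIntegral_nonneg measurableSet_Iic
      (fun t _ => gaussianPDFReal_nonneg 0 1 t))]
  rfl

lemma Phi_sub_Phi (a b : ℝ) : Phi b - Phi a = ∫ x in a..b, pdf x := by
  rw [Phi_eq, Phi_eq]
  exact intervalIntegral.integral_Iic_sub_Iic pdf_integrable.integrableOn
    pdf_integrable.integrableOn

lemma Phi_strictMono : StrictMono Phi := by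
  intro a b hab
  have h := Phi_sub_Phi a b
  have : 0 < ∫ x in a..b, pdf x :=
    intervalIntegral.intervalIntegral_pos_of_pos (pdf_intervalIntegrable a b) pdf_pos hab
  linarith

lemma Phi_mono : Monotone Phi := Phi_strictMono.monotone

lemma Phi_le_one (x : ℝ) : Phi x ≤ 1 := by
  rw [Phi]
  have : (gaussianReal 0 1) (Set.Iic x) ≤ 1 := prob_le_one
  exact_mod_cast ENNReal.toReal_le_of_le_ofReal zero_le_one (by simpa using this)

lemma Phi_nonneg (x : ℝ) : 0 ≤ Phi x := ENNReal.toReal_nonneg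

/-- shift key lemma -/
lemma integral_shift_lt {a b c : ℝ} (ha : 0 ≤ a) (hab : a < b) (hc : 0 < c) :
    (∫ x in a..b, pdf (x + c)) < ∫ x in a..b, pdf x := by
  have h1 : IntervalIntegrable (fun x => pdf (x + c)) volume a b := by
    have := (pdf_integrable.comp_add_right c).intervalIntegrable (a := a) (b := b)
    exact this
  have h2 : 0 < ∫ x in a..b, (pdf x - pdf (x + c)) := by
    apply intervalIntegral.intervalIntegral_pos_of_pos_on
    · exact (pdf_intervalIntegrable a b).sub h1
    · intro x hx
      have hx0 : 0 ≤ x := ha.trans hx.1.le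
      have : pdf (x + c) < pdf x := pdf_lt hx0 (by linarith)
      linarith
    · exact hab
  have h3 := intervalIntegral.integral_sub (pdf_intervalIntegrable a b) h1
  rw [h3] at h2
  linarith

lemma reflect (a b : ℝ) : (∫ x in a..b, pdf x) = ∫ x in -b..-a, pdf x := by
  rw [← intervalIntegral.integral_comp_neg pdf]
  simp_rw [pdf_even]

lemma P1 {l : ℝ} (hl : l ∈ Set.Ioo (0:ℝ) 1) :
    Phi (l + 1) - Phi 1 < Phi (l - 1) - Phi (-1) := by
  obtain ⟨hl0, hl1⟩ := hl
  rw [Phi_sub_Phi, Phi_sub_Phi]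
  have hr : (∫ x in (-1:ℝ)..(l-1), pdf x) = ∫ x in (1-l)..(1:ℝ), pdf x := by
    rw [reflect]; norm_num
  have hlft : (∫ x in (1:ℝ)..(l+1), pdf x) = ∫ x in (1-l)..(1:ℝ), pdf (x + l) := by
    rw [intervalIntegral.integral_comp_add_right]
    norm_num [add_comm]
  rw [hr, hlft]
  exact integral_shift_lt (by linarith) (by linarith) hl0

lemma P2 {l : ℝ} (hl : l ∈ Set.Ioo (0:ℝ) 1) :
    Phi (l - 1) - Phi (-1) < Phi l - Phi 0 := by
  obtain ⟨hl0, hl1⟩ := hl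
  rw [Phi_sub_Phi, Phi_sub_Phi]
  have hr : (∫ x in (-1:ℝ)..(l-1), pdf x) = ∫ x in (1-l)..(1:ℝ), pdf x := by
    rw [reflect]; norm_num
  have hlft : (∫ x in (1-l)..(1:ℝ), pdf x) = ∫ x in (0:ℝ)..l, pdf (x + (1-l)) := by
    rw [intervalIntegral.integral_comp_add_right]
    norm_num
  rw [hr, hlft]
  exact integral_shift_lt le_rfl hl0 (by linarith)

end Stmt6Aux

open Stmt6Aux in
theorem stmt_6 {Ω : Type*} [MeasurableSpace Ω] (μ : Measure Ω) [IsProbabilityMeasure μ]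
    (lam : Ω → ℝ) (hlam_meas : Measurable lam)
    (hlam_range : ∀ ω, lam ω ∈ Set.Ioo (0:ℝ) 1) :
    CATE μ lam (-1) < 0 ∧ CATE μ lam 1 < 0 ∧ CATE μ lam 0 < 0 ∧
    |CATE μ lam (-1)| < |CATE μ lam 1| ∧ |CATE μ lam 1| < |CATE μ lam 0| := by
  have hPm : Measurable Phi := Phi_mono.measurable
  -- integrability of ω ↦ Phi (lam ω - a)
  have hint : ∀ a : ℝ, Integrable (fun ω => Phi (lam ω - a)) μ := by
    intro a
    refine Integrable.mono' (integrable_const (1:ℝ))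
      ((hPm.comp (hlam_meas.sub measurable_const)).aestronglyMeasurable)
      (ae_of_all _ fun ω => ?_)
    rw [Real.norm_eq_abs, abs_of_nonneg (Phi_nonneg _)]
    exact Phi_le_one _
  -- strict integral comparison
  have hstrict : ∀ (f g : Ω → ℝ), Integrable f μ → Integrable g μ →
      (∀ ω, f ω < g ω) → (∫ ω, f ω ∂μ) < ∫ ω, g ω ∂μ := by
    intro f g hf hg h
    have hpos : 0 < ∫ ω, (g ω - f ω) ∂μ := by
      rw [integral_pos_iff_support_of_nonneg (fun ω => sub_nonneg.2 (h ω).le) (hg.sub hf)]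
      have : Function.support (fun ω => g ω - f ω) = Set.univ := by
        ext ω; simp [sub_ne_zero.2 (h ω).ne']
      rw [this]
      simp
    rw [integral_sub hg hf] at hpos
    linarith
  -- negativity
  have hneg : ∀ a : ℝ, CATE μ lam a < 0 := by
    intro a
    have : (∫ ω, Phi (-a) ∂μ) < ∫ ω, Phi (lam ω - a) ∂μ := by
      apply hstrict _ _ (integrable_const _) (hint a)
      intro ω
      exact Phi_strictMono (by linarith [(hlam_range ω).1])
    rw [integral_const] at this
    simp only [measure_univ, probReal_univ, one_smul] at this
    rw [CATE]
    linarith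
  have h1 := hneg (-1)
  have h2 := hneg 1
  have h3 := hneg 0
  refine ⟨h1, h2, h3, ?_, ?_⟩
  · rw [abs_of_neg h1, abs_of_neg h2, CATE, CATE]
    simp only [neg_neg]
    have : (∫ ω, (Phi (lam ω + 1) - Phi 1) ∂μ) < ∫ ω, (Phi (lam ω - 1) - Phi (-1)) ∂μ := by
      apply hstrict
      · simpa [sub_neg_eq_add, Pi.sub_def] using (hint (-1)).sub (integrable_const (Phi 1))
      · exact (hint 1).sub (integrable_const (Phi (-1)))
      · intro ω; exact P1 (hlam_range ω)
    rw [integral_sub _ (integrable_const _), integral_sub (hint 1) (integrable_const _)] at this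
    · simp only [integral_const, measure_univ, probReal_univ, one_smul] at this
      have he : (∫ ω, Phi (lam ω - (-1)) ∂μ) = ∫ ω, Phi (lam ω + 1) ∂μ := by
        simp [sub_neg_eq_add]
      rw [he]
      linarith
    · simpa [sub_neg_eq_add] using hint (-1)
  · rw [abs_of_neg h2, abs_of_neg h3, CATE, CATE]
    have : (∫ ω, (Phi (lam ω - 1) - Phi (-1)) ∂μ) < ∫ ω, (Phi (lam ω) - Phi 0) ∂μ := by
      apply hstrict
      · exact (hint 1).sub (integrable_const (Phi (-1)))
      · simpa [Pi.sub_def] using (hint 0).sub (integrable_const (Phi 0))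
      · intro ω; exact P2 (hlam_range ω)
    rw [integral_sub (hint 1) (integrable_const _), integral_sub _ (integrable_const _)] at this
    · simp only [integral_const, measure_univ, probReal_univ, one_smul] at this
      have he : (∫ ω, Phi (lam ω - 0) ∂μ) = ∫ ω, Phi (lam ω) ∂μ := by simp
      rw [he, neg_zero]
      linarith
    · simpa using hint 0
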